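/- Let f : ℝ^d → ℝ be a differentiable function whose infimum f* is attained. If f satisfies the Polyak–Łojasiewicz (PL) condition with parameter μ > 0, then f satisfies the quadratic growth (QG) condition with some parameter ν > 0; that is, for every x ∈ ℝ^d there exists a global minimizer x_p of f with f(x) − f* ≥ (ν/2)·‖x − x_p‖². -/

import Mathlib

open Filter Topology

section Aux

variable {E : Type*} [NormedAddCommGroup E] [InnerProductSpace ℝ E] [CompleteSpace E]

/-- Ekeland's variational principle (for continuous functions bounded below). -/
lemma my_ekeland (f : E → ℝ) (fstar : ℝ) (hc : Continuous f) (hlb : ∀ x, fstar ≤ f x)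
    {c : ℝ} (hcpos : 0 < c) (x : E) :
    ∃ y, f y ≤ f x ∧ c * dist x y ≤ f x - f y ∧ ∀ z, f y ≤ f z + c * dist y z := by
  classical
  set S : E → Set E := fun y => {z | f z + c * dist z y ≤ f y} with hS
  have hSelf : ∀ y, y ∈ S y := by intro y; simp [hS]
  have hbdd : ∀ y, BddBelow (f '' S y) := by
    intro y
    exact ⟨fstar, by rintro _ ⟨z, _, rfl⟩; exact hlb z⟩
  set m : E → ℝ := fun y => sInf (f '' S y) with hm
  have hmle : ∀ y z, z ∈ S y → m y ≤ f z := fun y z hz => csInf_le (hbdd y) ⟨z, hz, rfl⟩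
  have hstep : ∀ n : ℕ, ∀ y : E, ∃ z, z ∈ S y ∧ f z < m y + (1 / 2) ^ n := by
    intro n y
    have h2 : (0 : ℝ) < (1 / 2) ^ n := by positivity
    obtain ⟨w, hw, hwlt⟩ := exists_lt_of_csInf_lt (Set.Nonempty.image f ⟨y, hSelf y⟩)
      (lt_add_of_pos_right (m y) h2)
    obtain ⟨z, hz, rfl⟩ := hw
    exact ⟨z, hz, hwlt⟩
  set step : ℕ → E → E := fun n y => Classical.choose (hstep n y) with hstepdef
  have hstep' : ∀ n y, step n y ∈ S y ∧ f (step n y) < m y + (1 / 2) ^ n :=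
    fun n y => Classical.choose_spec (hstep n y)
  set u : ℕ → E := fun n => Nat.rec x (fun k yk => step k yk) n with hu
  have hu0 : u 0 = x := rfl
  have husucc : ∀ n, u (n + 1) = step n (u n) := fun n => rfl
  have htrans : ∀ a b z : E, z ∈ S b → b ∈ S a → z ∈ S a := by
    intro a b z hz hb
    simp only [hS, Set.mem_setOf_eq] at *
    have := dist_triangle z b a
    nlinarith [hcpos]
  have hchain : ∀ n k : ℕ, u (n + k) ∈ S (u n) := by
    intro n k
    induction k with
    | zero => exact hSelf (u n)
    | succ k ih =>
      have : u (n + (k + 1)) ∈ S (u (n + k)) := by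
        rw [show n + (k + 1) = (n + k) + 1 by ring, husucc]
        exact (hstep' (n + k) (u (n + k))).1
      exact htrans _ _ _ this ih
  have hmono : ∀ n k : ℕ, f (u (n + k)) ≤ f (u n) := by
    intro n k
    have := hchain n k
    simp only [hS, Set.mem_setOf_eq] at this
    nlinarith [@dist_nonneg E _ (u (n + k)) (u n)]
  have hfbdd : BddBelow (Set.range fun n => f (u n)) :=
    ⟨fstar, by rintro _ ⟨n, rfl⟩; exact hlb _⟩
  set L : ℝ := ⨅ n, f (u n) with hL
  have hLle : ∀ n, L ≤ f (u n) := fun n => ciInf_le hfbdd n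
  have hanti : Antitone fun n => f (u n) := by
    intro a b hab
    obtain ⟨k, rfl⟩ := Nat.exists_eq_add_of_le hab
    exact hmono a k
  have htendL : Tendsto (fun n => f (u n)) atTop (𝓝 L) :=
    tendsto_atTop_ciInf hanti hfbdd
  -- Cauchy
  have hcauchy : CauchySeq u := by
    rw [Metric.cauchySeq_iff']
    intro ε hε
    have : ∀ᶠ n in atTop, f (u n) < L + c * ε := by
      have := htendL.eventually (eventually_lt_nhds (lt_add_of_pos_right L (mul_pos hcpos hε)))
      exact this
    obtain ⟨N, hN⟩ := this.exists_forall_of_atTop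
    refine ⟨N, fun n hn => ?_⟩
    obtain ⟨k, rfl⟩ := Nat.exists_eq_add_of_le hn
    have hmem := hchain N k
    simp only [hS, Set.mem_setOf_eq] at hmem
    have h1 : c * dist (u (N + k)) (u N) ≤ f (u N) - f (u (N + k)) := by linarith
    have h2 : f (u N) - f (u (N + k)) < c * ε := by
      have := hLle (N + k); have := hN N le_rfl; linarith
    have := h1.trans_lt h2
    exact lt_of_mul_lt_mul_left this hcpos.le
  obtain ⟨y, hy⟩ := cauchySeq_tendsto_of_complete hcauchy
  have hfy : Tendsto (fun n => f (u n)) atTop (𝓝 (f y)) :=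
    (hc.continuousAt.tendsto.comp hy)
  have hfyL : f y = L := tendsto_nhds_unique hfy htendL
  have hymem : ∀ n, f y + c * dist y (u n) ≤ f (u n) := by
    intro n
    have htend : Tendsto (fun k => f (u (n + k)) + c * dist (u (n + k)) (u n)) atTop
        (𝓝 (f y + c * dist y (u n))) := by
      have hnk : Tendsto (fun k : ℕ => n + k) atTop atTop := by
        simpa [Nat.add_comm] using tendsto_add_atTop_nat n
      have h1 : Tendsto (fun k => u (n + k)) atTop (𝓝 y) := hy.comp hnk
      exact ((hc.continuousAt.tendsto.comp h1).add
        (((continuous_id.dist continuous_const).continuousAt.tendsto.comp h1).const_mul c))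
    refine le_of_tendsto htend (Eventually.of_forall fun k => ?_)
    have := hchain n k
    simpa [hS] using this
  refine ⟨y, ?_, ?_, ?_⟩
  · have := hymem 0
    rw [hu0] at this
    nlinarith [@dist_nonneg E _ y x]
  · have := hymem 0
    rw [hu0, dist_comm y x] at this
    linarith
  · intro z
    by_contra hcontra
    push_neg at hcontra
    have hzmem : ∀ n, z ∈ S (u n) := by
      intro n
      simp only [hS, Set.mem_setOf_eq]
      have h1 := hymem n
      have h2 := dist_triangle z y (u n)
      have : dist z y = dist y z := dist_comm z y
      nlinarith
    have hfyz : ∀ n : ℕ, f y ≤ f z + (1 / 2) ^ n := by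
      intro n
      have h1 : L ≤ f (u (n + 1)) := hLle (n + 1)
      have h2 : f (u (n + 1)) < m (u n) + (1 / 2) ^ n := by
        rw [husucc]; exact (hstep' n (u n)).2
      have h3 : m (u n) ≤ f z := hmle _ _ (hzmem n)
      rw [hfyL]; linarith
    have htz : Tendsto (fun n : ℕ => f z + (1 / 2) ^ n) atTop (𝓝 (f z)) := by
      have := tendsto_pow_atTop_nhds_zero_of_lt_one (by norm_num : (0:ℝ) ≤ 1/2) (by norm_num)
      simpa using (tendsto_const_nhds (x := f z)).add this
    have : f y ≤ f z := ge_of_tendsto htz (Eventually.of_forall hfyz)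
    nlinarith [@dist_nonneg E _ y z]

/-- If `f y ≤ f z + c * dist y z` for all `z`, then `‖gradient f y‖ ≤ c`. -/
lemma grad_le (f : E → ℝ) (y : E) (hd : DifferentiableAt ℝ f y) {c : ℝ} (hc : 0 ≤ c)
    (h : ∀ z, f y ≤ f z + c * dist y z) : ‖gradient f y‖ ≤ c := by
  by_contra hlt
  push_neg at hlt
  set g := gradient f y with hgdef
  have hg : g ≠ 0 := by
    intro h0
    rw [h0, norm_zero] at hlt
    exact absurd hlt (not_lt.2 hc)
  set v : E := -(‖g‖⁻¹ • g) with hv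
  have hvnorm : ‖v‖ = 1 := by
    simp [hv, norm_smul, abs_of_nonneg (inv_nonneg.2 (norm_nonneg g)),
      inv_mul_cancel₀ (norm_ne_zero_iff.2 hg)]
  have hline : HasDerivAt (fun t : ℝ => y + t • v) v 0 := by
    simpa using ((hasDerivAt_id (0 : ℝ)).smul_const v).const_add y
  have hF : HasFDerivAt f (InnerProductSpace.toDual ℝ E g) y :=
    hd.hasGradientAt.hasFDerivAt
  have hφ : HasDerivAt (fun t : ℝ => f (y + t • v)) (inner ℝ g v : ℝ) 0 := by
    have hF' : HasFDerivAt f (InnerProductSpace.toDual ℝ E g) ((0:ℝ) • v + y) := by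
      simpa using hF
    have := (HasFDerivAt.comp_hasDerivAt 0 hF'
      (by simpa [add_comm] using hline : HasDerivAt (fun t : ℝ => t • v + y) v 0))
    simpa [add_comm, Function.comp_def] using this
  have hinner : (inner ℝ g v : ℝ) = -‖g‖ := by
    rw [hv]
    simp only [inner_neg_right, real_inner_smul_right]
    rw [real_inner_self_eq_norm_sq]
    field_simp [norm_ne_zero_iff.2 hg]
  rw [hinner] at hφ
  have hslope : Tendsto (slope (fun t : ℝ => f (y + t • v)) 0) (𝓝[≠] 0) (𝓝 (-‖g‖)) :=
    hasDerivAt_iff_tendsto_slope.1 hφ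
  have hslope' : Tendsto (slope (fun t : ℝ => f (y + t • v)) 0) (𝓝[>] 0) (𝓝 (-‖g‖)) :=
    hslope.mono_left (nhdsWithin_mono 0 (fun t ht => ne_of_gt ht))
  have hge : -c ≤ -‖g‖ := by
    refine ge_of_tendsto hslope' ?_
    filter_upwards [self_mem_nhdsWithin] with t ht
    have htpos : (0 : ℝ) < t := ht
    have hdist : dist y (y + t • v) = t := by
      rw [dist_eq_norm]
      simp [norm_smul, hvnorm, abs_of_pos htpos]
    have hft := h (y + t • v)
    rw [hdist] at hft
    rw [slope_def_field]
    simp only [zero_smul, add_zero, sub_zero]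
    rw [le_div_iff₀ htpos]
    linarith
  nlinarith


/-- One step: shrink the gap by a factor 4 while moving at most `2 sqrt(gap/mu)`. -/
lemma pl_step (f : E → ℝ) (fstar μ : ℝ) (hdiff : Differentiable ℝ f)
    (hlb : ∀ x, fstar ≤ f x) (hμ : 0 < μ)
    (hPL : ∀ x, μ * (f x - fstar) ≤ ‖gradient f x‖ ^ 2) (x : E) :
    ∃ y, f y - fstar ≤ (f x - fstar) / 4 ∧
      dist x y ≤ 2 * Real.sqrt ((f x - fstar) / μ) := by
  rcases eq_or_lt_of_le (hlb x) with heq | hgap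
  · exact ⟨x, by simp [← heq], by simp [← heq]⟩
  · set ε : ℝ := f x - fstar with hε
    have hεpos : 0 < ε := by simp [hε]; linarith
    set c : ℝ := Real.sqrt (μ * ε) / 2 with hc
    have hcpos : 0 < c := by
      have : 0 < Real.sqrt (μ * ε) := Real.sqrt_pos.2 (mul_pos hμ hεpos)
      positivity
    obtain ⟨y, hy1, hy2, hy3⟩ := my_ekeland f fstar hdiff.continuous hlb hcpos x
    have hgrad : ‖gradient f y‖ ≤ c := grad_le f y (hdiff y) hcpos.le hy3
    have hc2 : c ^ 2 = μ * ε / 4 := by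
      rw [hc, div_pow, Real.sq_sqrt (mul_pos hμ hεpos).le]
      norm_num
    refine ⟨y, ?_, ?_⟩
    · have h1 := hPL y
      have h2 : ‖gradient f y‖ ^ 2 ≤ c ^ 2 := by
        have := norm_nonneg (gradient f y)
        nlinarith
      rw [hc2] at h2
      have h3 : μ * (f y - fstar) ≤ μ * ε / 4 := h1.trans h2
      calc f y - fstar ≤ ε / 4 := by nlinarith
        _ = (f x - fstar) / 4 := by rw [hε]
    · have hsr : Real.sqrt (ε / μ) * Real.sqrt (μ * ε) = ε := by
        rw [← Real.sqrt_mul (div_nonneg hεpos.le hμ.le)]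
        have hq : ε / μ * (μ * ε) = ε ^ 2 := by field_simp
        rw [hq, Real.sqrt_sq hεpos.le]
      have hkey : c * (2 * Real.sqrt (ε / μ)) = ε := by
        calc c * (2 * Real.sqrt (ε / μ))
            = Real.sqrt (ε / μ) * Real.sqrt (μ * ε) := by rw [hc]; ring
          _ = ε := hsr
      have h1 : c * dist x y ≤ ε := by
        have := hlb y
        calc c * dist x y ≤ f x - f y := hy2
          _ ≤ ε := by rw [hε]; linarith
      have h2 : c * dist x y ≤ c * (2 * Real.sqrt (ε / μ)) := by rw [hkey]; exact h1
      have := le_of_mul_le_mul_left h2 hcpos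
      simpa [hε] using this

/-- **PL implies QG.** If a differentiable `f : ℝ^d → ℝ` with attained infimum `fstar`
satisfies the Polyak–Łojasiewicz condition with parameter `μ > 0`, then it satisfies the
quadratic growth condition with some parameter `ν > 0`. -/
theorem pl_implies_qg (d : ℕ) (f : EuclideanSpace ℝ (Fin d) → ℝ) (fstar : ℝ) (μ : ℝ)
    (hdiff : Differentiable ℝ f)
    (hattained : ∃ xmin, f xmin = fstar)
    (hlb : ∀ x, fstar ≤ f x)
    (hμ : 0 < μ)
    (hPL : ∀ x, μ * (f x - fstar) ≤ ‖gradient f x‖ ^ 2) :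
    ∃ ν > (0 : ℝ), ∀ x, ∃ xp, f xp = fstar ∧ ν / 2 * ‖x - xp‖ ^ 2 ≤ f x - fstar := by
  refine ⟨μ / 8, by positivity, fun x => ?_⟩
  set ε : ℝ := f x - fstar with hε
  have hεnn : 0 ≤ ε := sub_nonneg.2 (hlb x)
  have hstep := pl_step f fstar μ hdiff hlb hμ hPL
  choose next h1 h2 using hstep
  set u : ℕ → EuclideanSpace ℝ (Fin d) := fun n => Nat.rec x (fun _ yk => next yk) n with hu
  have hu0 : u 0 = x := rfl
  have husucc : ∀ n, u (n + 1) = next (u n) := fun _ => rfl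
  have hgap : ∀ n, f (u n) - fstar ≤ ε / 4 ^ n := by
    intro n
    induction n with
    | zero => simp [hu0, hε]
    | succ n ih =>
      calc f (u (n + 1)) - fstar ≤ (f (u n) - fstar) / 4 := h1 (u n)
        _ ≤ ε / 4 ^ n / 4 := by linarith
        _ = ε / 4 ^ (n + 1) := by rw [pow_succ]; ring
  set C : ℝ := 2 * Real.sqrt (ε / μ) with hC
  have hdist : ∀ n, dist (u n) (u (n + 1)) ≤ C * (1 / 2) ^ n := by
    intro n
    refine (h2 (u n)).trans ?_
    have h4 : (((1 : ℝ) / 2) ^ n) ^ 2 = ((1 : ℝ) / 4) ^ n := by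
      rw [← pow_mul, mul_comm, pow_mul]; norm_num
    have heq : (ε / 4 ^ n) / μ = (ε / μ) * (((1 : ℝ) / 2) ^ n) ^ 2 := by
      rw [h4, show ((1:ℝ)/4) ^ n = ((4:ℝ) ^ n)⁻¹ by rw [one_div, inv_pow], div_div,
        mul_comm ((4:ℝ) ^ n) μ, ← div_div, div_eq_mul_inv (ε / μ)]
    have hmono : Real.sqrt ((f (u n) - fstar) / μ) ≤ Real.sqrt ((ε / 4 ^ n) / μ) := by
      apply Real.sqrt_le_sqrt
      have hgn := hgap n
      exact div_le_div_of_nonneg_right hgn hμ.le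
    calc 2 * Real.sqrt ((f (u n) - fstar) / μ)
        ≤ 2 * Real.sqrt ((ε / 4 ^ n) / μ) := by linarith
      _ = C * (1 / 2) ^ n := by
          rw [heq, Real.sqrt_mul (div_nonneg hεnn hμ.le),
            Real.sqrt_sq (by positivity : (0:ℝ) ≤ ((1:ℝ)/2) ^ n), hC]
          ring
  have hcauchy : CauchySeq u := cauchySeq_of_le_geometric (1 / 2) C (by norm_num) hdist
  obtain ⟨xp, hxp⟩ := cauchySeq_tendsto_of_complete hcauchy
  have hfxp : f xp = fstar := by
    have ht1 : Tendsto (fun n => f (u n)) atTop (𝓝 (f xp)) :=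
      hdiff.continuous.continuousAt.tendsto.comp hxp
    have ht2 : Tendsto (fun n => f (u n)) atTop (𝓝 fstar) := by
      have hup : Tendsto (fun n : ℕ => fstar + ε * (1 / 4) ^ n) atTop (𝓝 fstar) := by
        have := tendsto_pow_atTop_nhds_zero_of_lt_one (by norm_num : (0:ℝ) ≤ 1/4) (by norm_num)
        simpa using (tendsto_const_nhds (x := fstar)).add (this.const_mul ε)
      refine tendsto_of_tendsto_of_tendsto_of_le_of_le tendsto_const_nhds hup
        (fun n => hlb (u n)) (fun n => ?_)
      have hgn := hgap n
      have heq4 : ε / 4 ^ n = ε * (1 / 4) ^ n := by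
        rw [one_div, inv_pow, div_eq_mul_inv]
      linarith [heq4 ▸ hgn]
    exact tendsto_nhds_unique ht1 ht2
  have hdxp : dist x xp ≤ C / (1 - 1 / 2) := by
    have := dist_le_of_le_geometric_of_tendsto₀ (1 / 2) C (by norm_num) hdist hxp
    rwa [hu0] at this
  have hb : dist x xp ≤ 4 * Real.sqrt (ε / μ) := by
    refine hdxp.trans_eq ?_
    rw [show (1:ℝ) - 1 / 2 = 1 / 2 by norm_num, hC,
      div_eq_iff (by norm_num : (1:ℝ) / 2 ≠ 0)]
    ring
  refine ⟨xp, hfxp, ?_⟩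
  have hnd : ‖x - xp‖ = dist x xp := (dist_eq_norm x xp).symm
  have hsq : ‖x - xp‖ ^ 2 ≤ 16 * (ε / μ) := by
    rw [hnd]
    have h0 : (0 : ℝ) ≤ dist x xp := dist_nonneg
    have hs : Real.sqrt (ε / μ) ^ 2 = ε / μ := Real.sq_sqrt (div_nonneg hεnn hμ.le)
    nlinarith [Real.sqrt_nonneg (ε / μ)]
  have hfin : μ / 16 * (16 * (ε / μ)) = ε := by field_simp
  have hnn : (0 : ℝ) ≤ μ / 16 := by positivity
  calc μ / 8 / 2 * ‖x - xp‖ ^ 2 = μ / 16 * ‖x - xp‖ ^ 2 := by ring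
    _ ≤ μ / 16 * (16 * (ε / μ)) := mul_le_mul_of_nonneg_left hsq hnn
    _ = ε := hfin
    _ = f x - fstar := hε.symm
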